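/- For D = 1 and A ≥ 1, and any representation N over {-1,0,1} of a positive integer, the delay satisfies δ(N, i) = T(N, i) − i for all i, where δ is defined by the recursion: δ(N,0) = 0; δ(N,i) = δ(N,i-1) − 1 if i > 0 and n_i = 0; δ(N,i) = 0 if n_i ≠ 0 and all lower digits are 0; δ(N,i) = max(δ(N,i-1) + (A−1), A) otherwise. -/
import Mathlib


noncomputable def T (D A : ℝ) (d : ℕ → ℤ) : ℕ → ℝ
  | 0 => if d 0 = 0 then 0 else (((d 0).natAbs : ℝ) - 1) * A
  | i + 1 =>
      if d (i + 1) = 0 then T D A d i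
      else if ∀ j < i + 1, d j = 0 then
        ((i : ℝ) + 1) * D + (((d (i + 1)).natAbs : ℝ) - 1) * A
      else max (T D A d i) (((i : ℝ) + 1) * D) + ((d (i + 1)).natAbs : ℝ) * A

noncomputable def delta (A : ℝ) (d : ℕ → ℤ) : ℕ → ℝ
  | 0 => 0
  | i + 1 =>
      if d (i + 1) = 0 then delta A d i - 1
      else if ∀ j < i + 1, d j = 0 then 0
      else max (delta A d i + (A - 1)) A

def val (d : ℕ → ℤ) (lam : ℕ) : ℤ := ∑ i ∈ Finset.range (lam + 1), d i * 2 ^ i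

/-- For D = 1 and A ≥ 1, the delay of a {-1,0,1}-representation satisfies
δ(N,i) = T(N,i) − i for all i. -/
theorem stmt6 (A : ℝ) (hA : 1 ≤ A) (d : ℕ → ℤ)
    (hd : ∀ i, d i = -1 ∨ d i = 0 ∨ d i = 1) :
    ∀ i : ℕ, delta A d i = T 1 A d i - i := by
  have habs : ∀ k, d k ≠ 0 → ((d k).natAbs : ℝ) = 1 := by
    intro k hk; rcases hd k with h | h | h <;> simp [h] at hk ⊢
  intro i
  induction i with
  | zero =>
    simp only [delta, T]
    rcases hd 0 with h | h | h <;> simp [h]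
  | succ i ih =>
    simp only [delta, T]
    by_cases h1 : d (i + 1) = 0
    · simp only [h1, if_true, ih]
      push_cast; ring
    · by_cases h2 : ∀ j < i + 1, d j = 0
      · rw [if_neg h1, if_neg h1, if_pos h2, if_pos h2, habs _ h1]
        push_cast; ring
      · rw [if_neg h1, if_neg h1, if_neg h2, if_neg h2, habs _ h1, ih]
        rw [← max_add_add_right, ← max_sub_sub_right]
        congr 1 <;> push_cast <;> ring
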